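/- For every α ∈ (0,1) there is a constant c = c(α) such that for all v, w ∈ ℝ: ||v|^{α-1}v - |w|^{α-1}w|^{(α+1)/α} ≤ c · 𝔟_α[v,w]. -/

import Mathlib

open Real

/-- Superadditivity of rpow for reals. -/
lemma my_rpow_superadd {a b r : ℝ} (ha : 0 ≤ a) (hb : 0 ≤ b) (hr : 1 ≤ r) :
    a ^ r + b ^ r ≤ (a + b) ^ r := by
  have h := NNReal.add_rpow_le_rpow_add (a.toNNReal) (b.toNNReal) hr
  have h2 := NNReal.coe_le_coe.2 h
  push_cast [NNReal.coe_rpow] at h2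
  rwa [Real.coe_toNNReal a ha, Real.coe_toNNReal b hb] at h2

/-- Two-term power mean inequality for reals. -/
lemma my_rpow_add_le {a b r : ℝ} (ha : 0 ≤ a) (hb : 0 ≤ b) (hr : 1 ≤ r) :
    (a + b) ^ r ≤ 2 ^ (r - 1) * (a ^ r + b ^ r) := by
  have h := NNReal.rpow_add_le_mul_rpow_add_rpow (a.toNNReal) (b.toNNReal) hr
  have h2 := NNReal.coe_le_coe.2 h
  push_cast [NNReal.coe_rpow] at h2
  rwa [Real.coe_toNNReal a ha, Real.coe_toNNReal b hb] at h2

lemma my_sq_rpow {s : ℝ} (hs : 0 ≤ s) (r : ℝ) : (s ^ 2) ^ r = s ^ (2 * r) := by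
  rw [← Real.rpow_two, ← Real.rpow_mul hs]

/-- Scalar Clarkson inequality for q ≥ 2. -/
lemma my_clarkson {q : ℝ} (hq : 2 ≤ q) (x y : ℝ) :
    |x + y| ^ q + |x - y| ^ q ≤ 2 ^ (q - 1) * (|x| ^ q + |y| ^ q) := by
  have hq2 : (1:ℝ) ≤ q / 2 := by linarith
  have h1 : |x + y| ^ q = (|x + y| ^ 2) ^ (q / 2) := by
    rw [my_sq_rpow (abs_nonneg _)]; congr 1; ring
  have h2 : |x - y| ^ q = (|x - y| ^ 2) ^ (q / 2) := by
    rw [my_sq_rpow (abs_nonneg _)]; congr 1; ring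
  have h3 : (|x + y| ^ 2) ^ (q / 2) + (|x - y| ^ 2) ^ (q / 2)
      ≤ (|x + y| ^ 2 + |x - y| ^ 2) ^ (q / 2) :=
    my_rpow_superadd (by positivity) (by positivity) hq2
  have h4 : |x + y| ^ 2 + |x - y| ^ 2 = 2 * x ^ 2 + 2 * y ^ 2 := by
    rw [sq_abs, sq_abs]; ring
  have h5 : ((2 * x ^ 2 + 2 * y ^ 2 : ℝ)) ^ (q / 2)
      ≤ 2 ^ (q / 2 - 1) * ((2 * x ^ 2) ^ (q / 2) + (2 * y ^ 2) ^ (q / 2)) :=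
    my_rpow_add_le (by positivity) (by positivity) hq2
  have hxx : ((2 : ℝ) * x ^ 2) ^ (q / 2) = 2 ^ (q / 2) * |x| ^ q := by
    rw [Real.mul_rpow (by norm_num) (by positivity), ← sq_abs,
      my_sq_rpow (abs_nonneg _)]
    congr 1; ring
  have hyy : ((2 : ℝ) * y ^ 2) ^ (q / 2) = 2 ^ (q / 2) * |y| ^ q := by
    rw [Real.mul_rpow (by norm_num) (by positivity), ← sq_abs,
      my_sq_rpow (abs_nonneg _)]
    congr 1; ring
  have h2q : (2:ℝ) ^ (q / 2 - 1) * 2 ^ (q / 2) = 2 ^ (q - 1) := by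
    rw [← Real.rpow_add (by norm_num : (0:ℝ) < 2)]; congr 1; ring
  calc |x + y| ^ q + |x - y| ^ q
      = (|x + y| ^ 2) ^ (q / 2) + (|x - y| ^ 2) ^ (q / 2) := by rw [← h1, ← h2]
    _ ≤ (|x + y| ^ 2 + |x - y| ^ 2) ^ (q / 2) := h3
    _ = ((2 * x ^ 2 + 2 * y ^ 2 : ℝ)) ^ (q / 2) := by rw [h4]
    _ ≤ 2 ^ (q / 2 - 1) * ((2 * x ^ 2) ^ (q / 2) + (2 * y ^ 2) ^ (q / 2)) := h5
    _ = 2 ^ (q - 1) * (|x| ^ q + |y| ^ q) := by rw [hxx, hyy, ← h2q]; ring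

/-- Convexity (Bregman nonnegativity) for |·|^q/q, q ≥ 2. -/
lemma my_bregman_nonneg {q : ℝ} (hq : 2 ≤ q) (x y : ℝ) :
    0 ≤ |x| ^ q / q - |y| ^ q / q - |y| ^ (q - 2) * y * (x - y) := by
  have hq0 : (0:ℝ) < q := by linarith
  rcases eq_or_ne y 0 with rfl | hy
  · simp only [abs_zero, Real.zero_rpow hq0.ne', mul_zero, zero_mul, sub_zero, zero_div]
    have : (0:ℝ) ≤ |x| ^ q / q := by positivity
    linarith [this]
  · have hay : 0 < |y| := abs_pos.2 hy
    have hgy : |y| ^ (q - 2) * y * y = |y| ^ q := by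
      have hyy : y * y = |y| ^ (2:ℝ) := by
        rw [Real.rpow_two, sq_abs]; ring
      rw [mul_assoc, hyy, ← Real.rpow_add hay]; congr 1; ring
    have hgx : |y| ^ (q - 2) * y * x ≤ |y| ^ (q - 1) * |x| := by
      calc |y| ^ (q - 2) * y * x ≤ |(|y| ^ (q - 2) * y * x)| := le_abs_self _
        _ = |y| ^ (q - 2) * |y| * |x| := by
            rw [abs_mul, abs_mul, abs_of_nonneg (Real.rpow_nonneg (abs_nonneg y) _)]
        _ = |y| ^ (q - 1) * |x| := by
            rw [← Real.rpow_add_one hay.ne', show q - 2 + 1 = q - 1 by ring]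
    have hconj : Real.HolderConjugate q (q / (q - 1)) := by
      exact (Real.holderConjugate_iff_eq_conjExponent (by linarith)).2 rfl
    have hyoung := Real.young_inequality_of_nonneg (abs_nonneg x)
      (Real.rpow_nonneg (abs_nonneg y) (q - 1)) hconj
    have hpow : ((|y| : ℝ) ^ (q - 1)) ^ (q / (q - 1)) = |y| ^ q := by
      rw [← Real.rpow_mul (abs_nonneg y)]; congr 1
      have h1 : q - 1 ≠ 0 := by linarith
      field_simp
    rw [hpow] at hyoung
    have hdiv : |y| ^ q / (q / (q - 1)) = |y| ^ q - |y| ^ q / q := by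
      have h1 : q - 1 ≠ 0 := by linarith
      field_simp
    rw [hdiv] at hyoung
    have hexp : |y| ^ (q - 2) * y * (x - y) = |y| ^ (q - 2) * y * x - |y| ^ q := by
      rw [mul_sub, hgy]
    rw [hexp]
    have hcomm : |x| * |y| ^ (q - 1) = |y| ^ (q - 1) * |x| := mul_comm _ _
    rw [hcomm] at hyoung
    linarith [hgx, hyoung]

/-- Scalar uniform convexity: Bregman divergence of |·|^q/q dominates |x-y|^q, q ≥ 2. -/
lemma my_unif_convex {q : ℝ} (hq : 2 ≤ q) (x y : ℝ) :
    |x - y| ^ q ≤ q * 2 ^ (q - 1) *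
      (|x| ^ q / q - |y| ^ q / q - |y| ^ (q - 2) * y * (x - y)) := by
  have hq0 : (0:ℝ) < q := by linarith
  set A : ℝ := 2 ^ (q - 1) with hA
  have hApos : 0 < A := Real.rpow_pos_of_pos two_pos _
  set m : ℝ := (x + y) / 2 with hm
  have h5 : |x + y| ^ q + |x - y| ^ q ≤ A * (|x| ^ q + |y| ^ q) := my_clarkson hq x y
  rw [mul_add] at h5
  have h2A : (2:ℝ) * A = 2 ^ q := by
    have h := Real.rpow_add (show (0:ℝ) < 2 by norm_num) 1 (q - 1)
    rw [Real.rpow_one] at h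
    rw [hA, ← h]
    congr 1
    ring
  have h2qpos : (0:ℝ) < 2 ^ q := Real.rpow_pos_of_pos two_pos _
  have hmA : 2 * A * |m| ^ q = |x + y| ^ q := by
    have h1 : |m| = |x + y| / 2 := by rw [hm, abs_div]; norm_num
    rw [h1, Real.div_rpow (abs_nonneg _) (by norm_num : (0:ℝ) ≤ 2), h2A]
    field_simp
  have hB := my_bregman_nonneg hq m y
  have hmy : m - y = (x - y) / 2 := by rw [hm]; ring
  rw [hmy] at hB
  have hG : |y| ^ (q - 2) * y * (x - y) = 2 * (|y| ^ (q - 2) * y * ((x - y) / 2)) := by ring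
  have hED : |x| ^ q / q + |y| ^ q / q - 2 * (|m| ^ q / q)
      ≤ |x| ^ q / q - |y| ^ q / q - |y| ^ (q - 2) * y * (x - y) := by
    rw [hG]; linarith [hB]
  have hmul := mul_le_mul_of_nonneg_left hED (by positivity : (0:ℝ) ≤ q * A)
  have hqAE : q * A * (|x| ^ q / q + |y| ^ q / q - 2 * (|m| ^ q / q))
      = A * |x| ^ q + A * |y| ^ q - 2 * A * |m| ^ q := by
    field_simp
  rw [hqAE] at hmul
  linarith [h5, hmA, hmul]

theorem signed_power_diff_pow_le_bregman (α : ℝ) (hα0 : 0 < α) (hα1 : α < 1) :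
    ∃ c : ℝ, 0 < c ∧ ∀ v w : ℝ,
      |(|v| ^ (α - 1) * v) - (|w| ^ (α - 1) * w)| ^ ((α + 1) / α) ≤
        c * ((1 / (α + 1)) * (|w| ^ (α + 1) - |v| ^ (α + 1)) +
          (|v| ^ (α - 1) * v) * (v - w)) := by
  set q : ℝ := (α + 1) / α with hqdef
  have hq2 : 2 ≤ q := by
    rw [hqdef, le_div_iff₀ hα0]; linarith
  have hq0 : (0:ℝ) < q := by linarith
  have habs : ∀ u : ℝ, |(|u| ^ (α - 1) * u)| = |u| ^ α := by
    intro u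
    rcases eq_or_ne u 0 with rfl | hu
    · simp [Real.zero_rpow hα0.ne']
    · rw [abs_mul, abs_of_nonneg (Real.rpow_nonneg (abs_nonneg u) _),
        ← Real.rpow_add_one (abs_ne_zero.2 hu)]
      congr 1; ring
  have hpow : ∀ u : ℝ, |(|u| ^ (α - 1) * u)| ^ q = |u| ^ (α + 1) := by
    intro u
    rw [habs, ← Real.rpow_mul (abs_nonneg u)]
    congr 1
    rw [hqdef]; field_simp
  have hmul : ∀ u : ℝ, (|u| ^ (α - 1) * u) * u = |u| ^ (α + 1) := by
    intro u
    rcases eq_or_ne u 0 with rfl | hu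
    · simp [Real.zero_rpow (by linarith : α + 1 ≠ 0)]
    · have huu : u * u = |u| ^ (2:ℝ) := by rw [Real.rpow_two, sq_abs]; ring
      rw [mul_assoc, huu, ← Real.rpow_add (abs_pos.2 hu)]
      congr 1; ring
  refine ⟨q * 2 ^ (q - 1), by positivity, fun v w => ?_⟩
  set V : ℝ := |v| ^ (α - 1) * v with hV
  set W : ℝ := |w| ^ (α - 1) * w with hW
  have e1 : |V| ^ q = |v| ^ (α + 1) := hpow v
  have e2 : |W| ^ q = |w| ^ (α + 1) := hpow w
  have e3 : |W| ^ (q - 2) * W = w := by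
    rcases eq_or_ne w 0 with rfl | hw
    · simp [hW, Real.zero_rpow hα0.ne']
    · have hWabs : |W| = |w| ^ α := habs w
      rw [hWabs, ← Real.rpow_mul (abs_nonneg w), hW, ← mul_assoc,
        ← Real.rpow_add (abs_pos.2 hw)]
      have : α * (q - 2) + (α - 1) = 0 := by
        rw [hqdef]; field_simp; ring
      rw [this, Real.rpow_zero, one_mul]
  have e4 : V * v = |v| ^ (α + 1) := hmul v
  have e5 : W * w = |w| ^ (α + 1) := hmul w
  have key := my_unif_convex hq2 V W
  have harith : q * 2 ^ (q - 1) * (|V| ^ q / q - |W| ^ q / q - |W| ^ (q - 2) * W * (V - W))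
      = q * 2 ^ (q - 1) * ((1 / (α + 1)) * (|w| ^ (α + 1) - |v| ^ (α + 1)) + V * (v - w)) := by
    rw [e1, e2, e3]
    congr 1
    have hVv : V * v = |v| ^ (α + 1) := e4
    have hWw : W * w = |w| ^ (α + 1) := e5
    have h1 : w * (V - W) = V * w - |w| ^ (α + 1) := by
      rw [mul_sub, mul_comm w V, mul_comm w W, hWw]
    have h2 : V * (v - w) = |v| ^ (α + 1) - V * w := by
      rw [mul_sub, hVv]
    rw [h1, h2, hqdef]
    have ha1 : α + 1 ≠ 0 := by linarith
    field_simp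
    ring
  calc |V - W| ^ q
      ≤ q * 2 ^ (q - 1) * (|V| ^ q / q - |W| ^ q / q - |W| ^ (q - 2) * W * (V - W)) := key
    _ = q * 2 ^ (q - 1) * ((1 / (α + 1)) * (|w| ^ (α + 1) - |v| ^ (α + 1)) + V * (v - w)) :=
        harith
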